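/- Let n ≥ 2 and let φ be a Young function. Suppose Ψ' : L^φ(ℝⁿ,|x|²dx) → Mⁿ(ℝ) is a valuation and ξ ∈ C₀(ℝ). If Ψ'(h) = K(ξ∘h) for every non-negative h ∈ L^φ(ℝⁿ,|x|²dx) and for every non-positive h ∈ L^φ(ℝⁿ,|x|²dx), then Ψ'(h) = K(ξ∘h) for every h ∈ L^φ(ℝⁿ,|x|²dx). -/

import Mathlib

open MeasureTheory Filter Topology Matrix ENNReal

noncomputable section

/-- Euclidean space ℝⁿ. -/
abbrev Euc (n : ℕ) := EuclideanSpace ℝ (Fin n)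

/-- A Young function: `φ t = ∫₀ᵗ φ' s ds` for `t ≥ 0`, where `φ'` is nonnegative,
non-decreasing on `[0,∞)`, right-continuous, `φ' 0 = 0` and `φ' s → ∞` as `s → ∞`. -/
def IsYoungFunction (φ : ℝ → ℝ) : Prop :=
  ∃ φ' : ℝ → ℝ,
    (∀ s, 0 ≤ φ' s) ∧
    MonotoneOn φ' (Set.Ici 0) ∧
    (∀ s ∈ Set.Ici (0 : ℝ), ContinuousWithinAt φ' (Set.Ici s) s) ∧
    φ' 0 = 0 ∧
    Tendsto φ' atTop atTop ∧
    ∀ t ∈ Set.Ici (0 : ℝ), φ t = ∫ s in (0 : ℝ)..t, φ' s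

/-- The Δ₂-condition: `φ(2t) ≤ k φ(t)` for all `t ≥ T`. -/
def SatisfiesDeltaTwo (φ : ℝ → ℝ) : Prop :=
  ∃ T ≥ (0 : ℝ), ∃ k > (0 : ℝ), ∀ t ≥ T, φ (2 * t) ≤ k * φ t

/-- The complementary Young function `φ*`, as the Legendre transform
`φ*(t) = sup {s t - φ(s) : s ≥ 0}`. -/
def youngConj (φ : ℝ → ℝ) (t : ℝ) : ℝ :=
  sSup {y : ℝ | ∃ s ≥ (0 : ℝ), y = s * t - φ s}

/-- The weighted Lebesgue measure `|x|² dx` on ℝⁿ. -/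
def wMeasure (n : ℕ) : Measure (Euc n) :=
  volume.withDensity fun x => ENNReal.ofReal (‖x‖ ^ 2)

/-- Membership in the Orlicz space `L^φ(ℝⁿ, |x|²dx)`:
`∫ φ(δ|h(x)|) |x|² dx < ∞` for every `δ > 0`. -/
def MemOrlicz (φ : ℝ → ℝ) {n : ℕ} (h : Euc n → ℝ) : Prop :=
  Measurable h ∧
    ∀ δ > (0 : ℝ), ∫⁻ x, ENNReal.ofReal (φ (δ * |h x|)) ∂(wMeasure n) < ⊤

/-- The Orlicz norm
`‖h‖_φ = sup { ∫ |h g| |x|² dx : g measurable, ∫ φ*(|g|) |x|² dx ≤ 1 }`. -/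
def orliczNorm (φ : ℝ → ℝ) {n : ℕ} (h : Euc n → ℝ) : ℝ≥0∞ :=
  ⨆ g ∈ {g : Euc n → ℝ | Measurable g ∧
      ∫⁻ x, ENNReal.ofReal (youngConj φ |g x|) ∂(wMeasure n) ≤ 1},
    ∫⁻ x, ENNReal.ofReal |h x * g x| ∂(wMeasure n)

/-- The moment matrix `K(h)` with entries `K_{ij}(h) = ∫ h(x) xᵢ xⱼ dx`. -/
def momentMatrix (n : ℕ) (h : Euc n → ℝ) : Matrix (Fin n) (Fin n) ℝ :=
  fun i j => ∫ x : Euc n, h x * x i * x j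

/-- `Ψ` is a valuation on `L^φ(ℝⁿ, |x|²dx)`:
`Ψ(h₁ ∨ h₂) + Ψ(h₁ ∧ h₂) = Ψ(h₁) + Ψ(h₂)`. -/
def IsValuation (φ : ℝ → ℝ) {n : ℕ}
    (Ψ : (Euc n → ℝ) → Matrix (Fin n) (Fin n) ℝ) : Prop :=
  ∀ h₁ h₂ : Euc n → ℝ, MemOrlicz φ h₁ → MemOrlicz φ h₂ →
    Ψ (fun x => max (h₁ x) (h₂ x)) + Ψ (fun x => min (h₁ x) (h₂ x)) = Ψ h₁ + Ψ h₂

/-- `Ψ` is `SL(n)` covariant: `Ψ(h ∘ ϑ⁻¹) = ϑ Ψ(h) ϑᵗ` for all `ϑ ∈ SL(n,ℝ)`. -/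
def IsSLCovariant (φ : ℝ → ℝ) {n : ℕ}
    (Ψ : (Euc n → ℝ) → Matrix (Fin n) (Fin n) ℝ) : Prop :=
  ∀ h : Euc n → ℝ, MemOrlicz φ h → ∀ ϑ : Matrix.SpecialLinearGroup (Fin n) ℝ,
    Ψ (fun x => h (WithLp.toLp 2 (((ϑ⁻¹ : Matrix.SpecialLinearGroup (Fin n) ℝ) :
        Matrix (Fin n) (Fin n) ℝ).mulVec x))) =
      (ϑ : Matrix (Fin n) (Fin n) ℝ) * Ψ h * (ϑ : Matrix (Fin n) (Fin n) ℝ)ᵀ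

/-- `Ψ` is continuous: `Ψ(h_k) → Ψ(h)` whenever `‖h_k − h‖_φ → 0`. -/
def IsOrliczContinuous (φ : ℝ → ℝ) {n : ℕ}
    (Ψ : (Euc n → ℝ) → Matrix (Fin n) (Fin n) ℝ) : Prop :=
  ∀ h : Euc n → ℝ, MemOrlicz φ h → ∀ hk : ℕ → Euc n → ℝ, (∀ k, MemOrlicz φ (hk k)) →
    Tendsto (fun k => orliczNorm φ (fun x => hk k x - h x)) atTop (𝓝 0) →
    Tendsto (fun k => Ψ (hk k)) atTop (𝓝 (Ψ h))

/-- `ξ ∈ C_φ(ℝ)`: `ξ` is continuous and `|ξ(β)| ≤ γ φ(|β|)` for some `γ ≥ 0`. -/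
def MemCphi (φ ξ : ℝ → ℝ) : Prop :=
  Continuous ξ ∧ ∃ γ ≥ (0 : ℝ), ∀ β : ℝ, |ξ β| ≤ γ * φ |β|

/-- The counter-clockwise rotation by `π/2` in `ℝ²`. -/
def rotHalfPi : Matrix (Fin 2) (Fin 2) ℝ := !![0, -1; 1, 0]

/-- A (nonempty) compact convex polytope: the convex hull of a nonempty finite set. -/
def IsPolytope {n : ℕ} (Q : Set (Euc n)) : Prop :=
  ∃ S : Finset (Euc n), S.Nonempty ∧ Q = convexHull ℝ (S : Set (Euc n))

/-- The moment matrix `M(Q)` of a polytope, with entries `∫_Q xᵢ xⱼ dx`. -/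
def polytopeMoment (n : ℕ) (Q : Set (Euc n)) : Matrix (Fin n) (Fin n) ℝ :=
  fun i j => ∫ x in Q, x i * x j

/-- A valuation on polytopes: `Y(P) + Y(Q) = Y(P ∪ Q) + Y(P ∩ Q)` whenever `P ∪ Q`
is a polytope. -/
def IsPolyValuation {n : ℕ} (Y : Set (Euc n) → Matrix (Fin n) (Fin n) ℝ) : Prop :=
  ∀ P Q : Set (Euc n), IsPolytope P → IsPolytope Q → IsPolytope (P ∪ Q) →
    Y P + Y Q = Y (P ∪ Q) + Y (P ∩ Q)

/-- `SL(n)` covariance on polytopes: `Y(ϑ Q) = ϑ Y(Q) ϑᵗ`. -/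
def IsPolySLCovariant {n : ℕ} (Y : Set (Euc n) → Matrix (Fin n) (Fin n) ℝ) : Prop :=
  ∀ Q : Set (Euc n), IsPolytope Q → ∀ ϑ : Matrix.SpecialLinearGroup (Fin n) ℝ,
    Y ((fun x : Euc n =>
        (WithLp.toLp 2 ((ϑ : Matrix (Fin n) (Fin n) ℝ).mulVec x : Fin n → ℝ) : Euc n)) '' Q) =
      (ϑ : Matrix (Fin n) (Fin n) ℝ) * Y Q * (ϑ : Matrix (Fin n) (Fin n) ℝ)ᵀ

/-- Continuity of `Y` with respect to the Hausdorff metric on polytopes. -/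
def IsPolyContinuous {n : ℕ} (Y : Set (Euc n) → Matrix (Fin n) (Fin n) ℝ) : Prop :=
  ∀ (Q : Set (Euc n)) (Qi : ℕ → Set (Euc n)), IsPolytope Q → (∀ i, IsPolytope (Qi i)) →
    Tendsto (fun i => Metric.hausdorffDist (Qi i) Q) atTop (𝓝 0) →
    Tendsto (fun i => Y (Qi i)) atTop (𝓝 (Y Q))

/-- `Y` is weak simple: constant on polytopes of dimension at most `n-1`. -/
def IsPolyWeakSimple {n : ℕ} (Y : Set (Euc n) → Matrix (Fin n) (Fin n) ℝ) : Prop :=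
  ∃ M₀ : Matrix (Fin n) (Fin n) ℝ, ∀ Q : Set (Euc n), IsPolytope Q →
    Module.finrank ℝ (vectorSpan ℝ Q) ≤ n - 1 → Y Q = M₀

/-- `Y` is simple: it vanishes on polytopes of dimension at most `n-1`. -/
def IsPolySimple {n : ℕ} (Y : Set (Euc n) → Matrix (Fin n) (Fin n) ℝ) : Prop :=
  ∀ Q : Set (Euc n), IsPolytope Q →
    Module.finrank ℝ (vectorSpan ℝ Q) ≤ n - 1 → Y Q = 0

/-- A closed cube in ℝⁿ: `{x : cᵢ ≤ xᵢ ≤ dᵢ}` with all side lengths equal. -/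
def IsClosedCube {n : ℕ} (C : Set (Euc n)) : Prop :=
  ∃ c d : Fin n → ℝ, (∀ i j, |c i - d i| = |c j - d j|) ∧
    C = {x : Euc n | ∀ i, c i ≤ x i ∧ x i ≤ d i}

/-- Auxiliary: a nonneg-part finiteness criterion. If the Bochner integral of `f`
is finitely additive over indicators of disjoint measurable sets, then the
positive part of `f` has finite lintegral. -/
lemma aux_lintegral_posPart_lt_top_of_split {n : ℕ} (f : Euc n → ℝ) (hf : Measurable f)
    (D : ∀ T₁ T₂ : Set (Euc n), MeasurableSet T₁ → MeasurableSet T₂ → Disjoint T₁ T₂ →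
      ∫ x, (T₁ ∪ T₂).indicator f x = (∫ x, T₁.indicator f x) + ∫ x, T₂.indicator f x) :
    ∫⁻ x, ENNReal.ofReal (f x) < ⊤ := by
  by_contra hinf
  push_neg at hinf
  rw [top_le_iff] at hinf
  set P : Set (Euc n) := {x | 0 < f x} with hP
  have hPm : MeasurableSet P := measurableSet_lt measurable_const hf
  have hPind : ∀ x, ENNReal.ofReal (f x) = ENNReal.ofReal (P.indicator f x) := by
    intro x
    by_cases hx : x ∈ P
    · rw [Set.indicator_of_mem hx]
    · rw [Set.indicator_of_notMem hx, ENNReal.ofReal_eq_zero.2 (le_of_not_gt hx), ofReal_zero]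
  have hPinf : ∫⁻ x, ENNReal.ofReal (P.indicator f x) = ⊤ := by
    rw [← lintegral_congr hPind]; exact hinf
  set T : ℕ → Set (Euc n) := fun k => P ∩ Metric.closedBall 0 k ∩ {x | f x ≤ k} with hT
  have hTm : ∀ k, MeasurableSet (T k) := fun k =>
    (hPm.inter measurableSet_closedBall).inter (measurableSet_le hf measurable_const)
  have hTP : ∀ k, T k ⊆ P := fun k x hx => hx.1.1
  have hTmono : Monotone T := by
    intro a b hab x hx
    refine ⟨⟨hx.1.1, Metric.closedBall_subset_closedBall (by exact_mod_cast hab) hx.1.2⟩, ?_⟩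
    exact le_trans (show f x ≤ (a:ℝ) from hx.2) (Nat.cast_le.2 hab)
  set g : ℕ → Euc n → ℝ≥0∞ := fun k x => ENNReal.ofReal ((T k).indicator f x) with hg
  have hgm : ∀ k, Measurable (g k) :=
    fun k => (hf.indicator (hTm k)).ennreal_ofReal
  have hgmono : Monotone g := by
    intro a b hab x
    by_cases hx : x ∈ T a
    · rw [hg]; simp only
      rw [Set.indicator_of_mem hx, Set.indicator_of_mem (hTmono hab hx)]
    · rw [hg]; simp only
      rw [Set.indicator_of_notMem hx, ofReal_zero]
      exact zero_le
  have hgsup : ∀ x, (⨆ k, g k x) = ENNReal.ofReal (P.indicator f x) := by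
    intro x
    by_cases hx : x ∈ P
    · obtain ⟨k, hk1, hk2⟩ : ∃ k : ℕ, ‖x‖ ≤ k ∧ f x ≤ k := by
        obtain ⟨k, hk⟩ := exists_nat_ge (max ‖x‖ (f x))
        exact ⟨k, (le_max_left _ _).trans hk, (le_max_right _ _).trans hk⟩
      apply le_antisymm
      · refine iSup_le fun k => ?_
        rw [hg]; simp only
        by_cases hxk : x ∈ T k
        · rw [Set.indicator_of_mem hxk, Set.indicator_of_mem hx]
        · rw [Set.indicator_of_notMem hxk, ofReal_zero]; exact zero_le
      · refine le_trans ?_ (le_iSup _ k)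
        rw [hg]; simp only
        rw [Set.indicator_of_mem hx, Set.indicator_of_mem
          (show x ∈ T k from ⟨⟨hx, by simpa [Metric.mem_closedBall] using hk1⟩, hk2⟩)]
    · simp only [Set.indicator_of_notMem hx, ofReal_zero]
      refine le_antisymm (iSup_le fun k => ?_) zero_le
      rw [hg]; simp only
      rw [Set.indicator_of_notMem (fun hxk => hx (hTP k hxk)), ofReal_zero]
  have hsup : (⨆ k, ∫⁻ x, g k x) = ⊤ := by
    rw [← lintegral_iSup hgm hgmono]
    rw [lintegral_congr hgsup, hPinf]
  obtain ⟨k, hkpos⟩ : ∃ k, 0 < ∫⁻ x, g k x := by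
    by_contra hc
    push_neg at hc
    simp only [le_zero_iff] at hc
    rw [iSup_congr hc] at hsup
    simp at hsup
  have hkfin : ∫⁻ x, g k x < ⊤ := by
    have hb : ∀ x, g k x ≤ (Metric.closedBall (0:Euc n) k).indicator (fun _ => ENNReal.ofReal k) x := by
      intro x
      by_cases hx : x ∈ T k
      · rw [hg]; simp only
        rw [Set.indicator_of_mem hx, Set.indicator_of_mem hx.1.2]
        exact ENNReal.ofReal_le_ofReal hx.2
      · rw [hg]; simp only
        rw [Set.indicator_of_notMem hx]
        simp
    calc ∫⁻ x, g k x ≤ ∫⁻ x, (Metric.closedBall (0:Euc n) k).indicator (fun _ => ENNReal.ofReal k) x :=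
          lintegral_mono hb
      _ = ENNReal.ofReal k * volume (Metric.closedBall (0:Euc n) k) :=
          lintegral_indicator_const measurableSet_closedBall _
      _ < ⊤ := ENNReal.mul_lt_top ofReal_lt_top (isCompact_closedBall _ _).measure_lt_top
  have hdisj : Disjoint (P \ T k) (T k) := disjoint_sdiff_self_left
  have hunion : (P \ T k) ∪ T k = P := Set.diff_union_of_subset (hTP k)
  have hD := D (P \ T k) (T k) (hPm.diff (hTm k)) (hTm k) hdisj
  rw [hunion] at hD
  have hindnn : ∀ (S : Set (Euc n)), S ⊆ P → ∀ x, 0 ≤ S.indicator f x := by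
    intro S hS x
    by_cases hx : x ∈ S
    · rw [Set.indicator_of_mem hx]; exact (hS hx).le
    · rw [Set.indicator_of_notMem hx]
  have hlsplit : ∫⁻ x, ENNReal.ofReal (P.indicator f x)
      = (∫⁻ x, ENNReal.ofReal ((P \ T k).indicator f x)) + ∫⁻ x, g k x := by
    rw [← lintegral_add_left (hf.indicator (hPm.diff (hTm k))).ennreal_ofReal]
    apply lintegral_congr
    intro x
    by_cases hx : x ∈ T k
    · rw [hg]; simp only
      rw [Set.indicator_of_mem hx, Set.indicator_of_mem (hTP k hx),
        Set.indicator_of_notMem (fun h : x ∈ P \ T k => h.2 hx), ofReal_zero, zero_add]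
    · by_cases hx' : x ∈ P
      · rw [hg]; simp only
        rw [Set.indicator_of_mem hx', Set.indicator_of_mem ((Set.mem_diff x).2 ⟨hx', hx⟩),
          Set.indicator_of_notMem hx, ofReal_zero, add_zero]
      · rw [hg]; simp only
        rw [Set.indicator_of_notMem hx', Set.indicator_of_notMem hx,
          Set.indicator_of_notMem (fun h : x ∈ P \ T k => hx' h.1), ofReal_zero, add_zero]
  have hT1inf : ∫⁻ x, ENNReal.ofReal ((P \ T k).indicator f x) = ⊤ := by
    by_contra hc
    have hlt : ∫⁻ x, ENNReal.ofReal (P.indicator f x) < ⊤ := by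
      rw [hlsplit]
      exact ENNReal.add_lt_top.2 ⟨lt_top_iff_ne_top.2 hc, hkfin⟩
    rw [hPinf] at hlt
    exact hlt.ne rfl
  have hnotint : ∀ (S : Set (Euc n)), S ⊆ P → MeasurableSet S →
      (∫⁻ x, ENNReal.ofReal (S.indicator f x)) = ⊤ → ∫ x, S.indicator f x = 0 := by
    intro S hS hSm hSinf
    apply integral_undef
    intro hint
    have := hint.2
    rw [hasFiniteIntegral_iff_norm] at this
    have heq : ∀ x, ENNReal.ofReal ‖S.indicator f x‖ = ENNReal.ofReal (S.indicator f x) := by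
      intro x; rw [Real.norm_of_nonneg (hindnn S hS x)]
    rw [lintegral_congr heq, hSinf] at this
    exact this.ne rfl
  have hPzero : ∫ x, P.indicator f x = 0 := hnotint P subset_rfl hPm hPinf
  have hT1zero : ∫ x, (P \ T k).indicator f x = 0 :=
    hnotint _ Set.diff_subset (hPm.diff (hTm k)) hT1inf
  have hT2int : Integrable ((T k).indicator f) := by
    constructor
    · exact (hf.indicator (hTm k)).aestronglyMeasurable
    · rw [hasFiniteIntegral_iff_norm]
      have heq : ∀ x, ENNReal.ofReal ‖(T k).indicator f x‖ = g k x := by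
        intro x; rw [hg]; simp only
        rw [Real.norm_of_nonneg (hindnn _ (hTP k) x)]
      rw [lintegral_congr heq]
      exact hkfin
  have hT2pos : 0 < ∫ x, (T k).indicator f x := by
    rw [integral_eq_lintegral_of_nonneg_ae (Filter.Eventually.of_forall (hindnn _ (hTP k)))
      (hf.indicator (hTm k)).aestronglyMeasurable]
    have hre : ∫⁻ x, ENNReal.ofReal ((T k).indicator f x) = ∫⁻ x, g k x := rfl
    rw [hre]
    exact ENNReal.toReal_pos hkpos.ne' hkfin.ne
  rw [hPzero, hT1zero, zero_add] at hD
  exact hT2pos.ne hD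

/-- Auxiliary: split-additivity of the Bochner integral over indicators of disjoint
measurable sets implies integrability. -/
lemma aux_integrable_of_split {n : ℕ} (f : Euc n → ℝ) (hf : Measurable f)
    (D : ∀ T₁ T₂ : Set (Euc n), MeasurableSet T₁ → MeasurableSet T₂ → Disjoint T₁ T₂ →
      ∫ x, (T₁ ∪ T₂).indicator f x = (∫ x, T₁.indicator f x) + ∫ x, T₂.indicator f x) :
    Integrable f := by
  have h1 := aux_lintegral_posPart_lt_top_of_split f hf D
  have hD' : ∀ T₁ T₂ : Set (Euc n), MeasurableSet T₁ → MeasurableSet T₂ → Disjoint T₁ T₂ →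
      ∫ x, (T₁ ∪ T₂).indicator (fun x => -f x) x
        = (∫ x, T₁.indicator (fun x => -f x) x) + ∫ x, T₂.indicator (fun x => -f x) x := by
    intro T₁ T₂ m1 m2 dj
    have e : ∀ (S : Set (Euc n)) (x : Euc n),
        S.indicator (fun x => -f x) x = - S.indicator f x := by
      intro S x
      by_cases hx : x ∈ S <;> simp [hx]
    simp only [e]
    rw [integral_neg, integral_neg, integral_neg, D T₁ T₂ m1 m2 dj]
    ring
  have h2 := aux_lintegral_posPart_lt_top_of_split (fun x => -f x) hf.neg hD'
  refine ⟨hf.aestronglyMeasurable, ?_⟩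
  rw [hasFiniteIntegral_iff_norm]
  have hb : ∀ x, ENNReal.ofReal ‖f x‖ ≤ ENNReal.ofReal (f x) + ENNReal.ofReal (-f x) := by
    intro x
    rcases le_total 0 (f x) with hx | hx
    · rw [Real.norm_of_nonneg hx]; exact self_le_add_right _ _
    · rw [Real.norm_of_nonpos hx]; exact self_le_add_left _ _
  calc ∫⁻ x, ENNReal.ofReal ‖f x‖
      ≤ ∫⁻ x, (ENNReal.ofReal (f x) + ENNReal.ofReal (-f x)) := lintegral_mono hb
    _ = (∫⁻ x, ENNReal.ofReal (f x)) + ∫⁻ x, ENNReal.ofReal (-f x) :=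
        lintegral_add_left hf.ennreal_ofReal _
    _ < ⊤ := ENNReal.add_lt_top.2 ⟨h1, h2⟩

lemma aux_young_zero {φ : ℝ → ℝ} (hφ : IsYoungFunction φ) : φ 0 = 0 := by
  obtain ⟨φ', _, _, _, _, _, h6⟩ := hφ
  rw [h6 0 (Set.mem_Ici.2 le_rfl), intervalIntegral.integral_same]

lemma aux_young_mono {φ : ℝ → ℝ} (hφ : IsYoungFunction φ) : MonotoneOn φ (Set.Ici 0) := by
  obtain ⟨φ', h1, h2, _, _, _, h6⟩ := hφ
  intro a ha b hb hab
  rw [h6 a ha, h6 b hb]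
  have hint : IntervalIntegrable φ' volume 0 b := by
    apply MonotoneOn.intervalIntegrable
    intro x hx y hy hxy
    rw [Set.uIcc_of_le (le_trans (Set.mem_Ici.1 ha) hab)] at hx hy
    exact h2 (Set.mem_Ici.2 hx.1) (Set.mem_Ici.2 hy.1) hxy
  exact intervalIntegral.integral_mono_interval le_rfl ha hab
    (Filter.Eventually.of_forall fun x => h1 x) hint

lemma aux_memOrlicz_mono {φ : ℝ → ℝ} (hφ : IsYoungFunction φ) {n : ℕ} {h u : Euc n → ℝ}
    (hm : MemOrlicz φ h) (hu : Measurable u) (hle : ∀ x, |u x| ≤ |h x|) :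
    MemOrlicz φ u := by
  refine ⟨hu, fun δ hδ => lt_of_le_of_lt
    (lintegral_mono fun x => ENNReal.ofReal_le_ofReal ?_) (hm.2 δ hδ)⟩
  exact aux_young_mono hφ (Set.mem_Ici.2 (mul_nonneg hδ.le (abs_nonneg _)))
    (Set.mem_Ici.2 (mul_nonneg hδ.le (abs_nonneg _)))
    (mul_le_mul_of_nonneg_left (hle x) hδ.le)

lemma aux_memOrlicz_zero {φ : ℝ → ℝ} (hφ : IsYoungFunction φ) {n : ℕ} :
    MemOrlicz φ (fun _ : Euc n => (0:ℝ)) := by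
  refine ⟨measurable_const, fun δ hδ => ?_⟩
  simp [abs_zero, mul_zero, aux_young_zero hφ]

/-- **Lemma 3.9.** Let `n ≥ 2`. If `Ψ'` is a valuation on `L^φ(ℝⁿ, |x|²dx)`,
`ξ ∈ C₀(ℝ)`, and `Ψ'(h) = K(ξ∘h)` holds for every non-negative and every
non-positive `h`, then it holds for every `h ∈ L^φ(ℝⁿ, |x|²dx)`. -/
theorem representation_extends_from_signed_parts (n : ℕ) (hn : 2 ≤ n)
    (φ : ℝ → ℝ) (hφ : IsYoungFunction φ)
    (Ψ' : (Euc n → ℝ) → Matrix (Fin n) (Fin n) ℝ) (hval : IsValuation φ Ψ')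
    (ξ : ℝ → ℝ) (hξc : Continuous ξ) (hξ0 : ξ 0 = 0)
    (hpos : ∀ h : Euc n → ℝ, MemOrlicz φ h → (∀ x, 0 ≤ h x) →
      Ψ' h = momentMatrix n fun x => ξ (h x))
    (hneg : ∀ h : Euc n → ℝ, MemOrlicz φ h → (∀ x, h x ≤ 0) →
      Ψ' h = momentMatrix n fun x => ξ (h x)) :
    ∀ h : Euc n → ℝ, MemOrlicz φ h → Ψ' h = momentMatrix n fun x => ξ (h x) := by
  intro h hmem
  have hmeas : Measurable h := hmem.1
  set u : Euc n → ℝ := fun x => max (h x) 0 with hu_def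
  set v : Euc n → ℝ := fun x => min (h x) 0 with hv_def
  have humeas : Measurable u := hmeas.max measurable_const
  have hvmeas : Measurable v := hmeas.min measurable_const
  have hunn : ∀ x, 0 ≤ u x := fun x => le_max_right _ _
  have hvnp : ∀ x, v x ≤ 0 := fun x => min_le_right _ _
  have huabs : ∀ x, |u x| ≤ |h x| := by
    intro x
    rw [hu_def]; simp only
    rw [abs_of_nonneg (le_max_right _ _)]
    exact max_le (le_abs_self _) (abs_nonneg _)
  have hvabs : ∀ x, |v x| ≤ |h x| := by
    intro x
    rw [hv_def]; simp only
    rw [abs_of_nonpos (min_le_right _ _), neg_le]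
    exact le_min (neg_abs_le _) (neg_nonpos.2 (abs_nonneg _))
  have humem : MemOrlicz φ u := aux_memOrlicz_mono hφ hmem humeas huabs
  have hvmem : MemOrlicz φ v := aux_memOrlicz_mono hφ hmem hvmeas hvabs
  have h0mem : MemOrlicz φ (fun _ : Euc n => (0:ℝ)) := aux_memOrlicz_zero hφ
  have hΨ0 : Ψ' (fun _ : Euc n => (0:ℝ)) = 0 := by
    rw [hpos _ h0mem (fun _ => le_rfl)]
    ext i j
    simp [momentMatrix, hξ0]
  have hind_mem : ∀ (w : Euc n → ℝ), Measurable w → (∀ x, |w x| ≤ |h x|) →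
      ∀ T : Set (Euc n), MeasurableSet T → MemOrlicz φ (T.indicator w) := by
    intro w hw hwle T hT
    refine aux_memOrlicz_mono hφ hmem (hw.indicator hT) fun x => ?_
    by_cases hx : x ∈ T
    · rw [Set.indicator_of_mem hx]; exact hwle x
    · rw [Set.indicator_of_notMem hx]; simp
  -- split identity for the nonnegative part u
  have hmatu : ∀ T₁ T₂ : Set (Euc n), MeasurableSet T₁ → MeasurableSet T₂ → Disjoint T₁ T₂ →
      momentMatrix n (fun x => ξ ((T₁ ∪ T₂).indicator u x))
        = momentMatrix n (fun x => ξ (T₁.indicator u x))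
          + momentMatrix n (fun x => ξ (T₂.indicator u x)) := by
    intro T₁ T₂ m1 m2 dj
    have m1' := hind_mem u humeas huabs T₁ m1
    have m2' := hind_mem u humeas huabs T₂ m2
    have m12' := hind_mem u humeas huabs (T₁ ∪ T₂) (m1.union m2)
    have hvv := hval (T₁.indicator u) (T₂.indicator u) m1' m2'
    have hmax : (fun x => max (T₁.indicator u x) (T₂.indicator u x))
        = (T₁ ∪ T₂).indicator u := by
      funext x
      by_cases h1 : x ∈ T₁
      · rw [Set.indicator_of_mem h1, Set.indicator_of_notMem (Set.disjoint_left.1 dj h1),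
          Set.indicator_of_mem (Set.mem_union_left _ h1)]
        exact max_eq_left (hunn x)
      · by_cases h2 : x ∈ T₂
        · rw [Set.indicator_of_notMem h1, Set.indicator_of_mem h2,
            Set.indicator_of_mem (Set.mem_union_right _ h2)]
          exact max_eq_right (hunn x)
        · rw [Set.indicator_of_notMem h1, Set.indicator_of_notMem h2,
            Set.indicator_of_notMem (fun hx => hx.elim h1 h2)]
          exact max_self 0
    have hmin : (fun x => min (T₁.indicator u x) (T₂.indicator u x))
        = (fun _ : Euc n => (0:ℝ)) := by
      funext x
      by_cases h1 : x ∈ T₁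
      · rw [Set.indicator_of_mem h1, Set.indicator_of_notMem (Set.disjoint_left.1 dj h1)]
        exact min_eq_right (hunn x)
      · rw [Set.indicator_of_notMem h1]
        by_cases h2 : x ∈ T₂
        · rw [Set.indicator_of_mem h2]; exact min_eq_left (hunn x)
        · rw [Set.indicator_of_notMem h2]; exact min_self 0
    rw [hmax, hmin, hΨ0, add_zero] at hvv
    rw [hpos _ m12' (fun x => Set.indicator_nonneg (fun y _ => hunn y) x),
        hpos _ m1' (fun x => Set.indicator_nonneg (fun y _ => hunn y) x),
        hpos _ m2' (fun x => Set.indicator_nonneg (fun y _ => hunn y) x)] at hvv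
    exact hvv
  -- split identity for the nonpositive part v
  have hindnp : ∀ (T : Set (Euc n)) (x : Euc n), T.indicator v x ≤ 0 := by
    intro T x
    by_cases hx : x ∈ T
    · rw [Set.indicator_of_mem hx]; exact hvnp x
    · rw [Set.indicator_of_notMem hx]
  have hmatv : ∀ T₁ T₂ : Set (Euc n), MeasurableSet T₁ → MeasurableSet T₂ → Disjoint T₁ T₂ →
      momentMatrix n (fun x => ξ ((T₁ ∪ T₂).indicator v x))
        = momentMatrix n (fun x => ξ (T₁.indicator v x))
          + momentMatrix n (fun x => ξ (T₂.indicator v x)) := by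
    intro T₁ T₂ m1 m2 dj
    have m1' := hind_mem v hvmeas hvabs T₁ m1
    have m2' := hind_mem v hvmeas hvabs T₂ m2
    have m12' := hind_mem v hvmeas hvabs (T₁ ∪ T₂) (m1.union m2)
    have hvv := hval (T₁.indicator v) (T₂.indicator v) m1' m2'
    have hmax : (fun x => max (T₁.indicator v x) (T₂.indicator v x))
        = (fun _ : Euc n => (0:ℝ)) := by
      funext x
      by_cases h1 : x ∈ T₁
      · rw [Set.indicator_of_mem h1, Set.indicator_of_notMem (Set.disjoint_left.1 dj h1)]
        exact max_eq_right (hvnp x)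
      · rw [Set.indicator_of_notMem h1]
        by_cases h2 : x ∈ T₂
        · rw [Set.indicator_of_mem h2]; exact max_eq_left (hvnp x)
        · rw [Set.indicator_of_notMem h2]; exact max_self 0
    have hmin : (fun x => min (T₁.indicator v x) (T₂.indicator v x))
        = (T₁ ∪ T₂).indicator v := by
      funext x
      by_cases h1 : x ∈ T₁
      · rw [Set.indicator_of_mem h1, Set.indicator_of_notMem (Set.disjoint_left.1 dj h1),
          Set.indicator_of_mem (Set.mem_union_left _ h1)]
        exact min_eq_left (hvnp x)
      · by_cases h2 : x ∈ T₂
        · rw [Set.indicator_of_notMem h1, Set.indicator_of_mem h2,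
            Set.indicator_of_mem (Set.mem_union_right _ h2)]
          exact min_eq_right (hvnp x)
        · rw [Set.indicator_of_notMem h1, Set.indicator_of_notMem h2,
            Set.indicator_of_notMem (fun hx => hx.elim h1 h2)]
          exact min_self 0
    rw [hmax, hmin, hΨ0, zero_add] at hvv
    rw [hneg _ m12' (fun x => hindnp _ x),
        hneg _ m1' (fun x => hindnp _ x),
        hneg _ m2' (fun x => hindnp _ x)] at hvv
    exact hvv
  -- integrability of the moment integrands
  have hintu : ∀ i j : Fin n, Integrable (fun x : Euc n => ξ (u x) * x i * x j) := by
    intro i j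
    refine aux_integrable_of_split _ ?_ ?_
    · exact ((hξc.measurable.comp humeas).mul (by fun_prop : Measurable fun x : Euc n => x i)).mul (by fun_prop : Measurable fun x : Euc n => x j)
    intro T₁ T₂ m1 m2 dj
    have e : ∀ (T : Set (Euc n)) (x : Euc n),
        T.indicator (fun x : Euc n => ξ (u x) * x i * x j) x
          = ξ (T.indicator u x) * x i * x j := by
      intro T x
      by_cases hx : x ∈ T
      · rw [Set.indicator_of_mem hx, Set.indicator_of_mem hx]
      · rw [Set.indicator_of_notMem hx, Set.indicator_of_notMem hx, hξ0, zero_mul, zero_mul]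
    have hm := hmatu T₁ T₂ m1 m2 dj
    have hm' : momentMatrix n (fun x => ξ ((T₁ ∪ T₂).indicator u x)) i j
        = momentMatrix n (fun x => ξ (T₁.indicator u x)) i j
          + momentMatrix n (fun x => ξ (T₂.indicator u x)) i j := by
      rw [hm, Matrix.add_apply]
    simp only [momentMatrix] at hm'
    simp only [e]
    exact hm'
  have hintv : ∀ i j : Fin n, Integrable (fun x : Euc n => ξ (v x) * x i * x j) := by
    intro i j
    refine aux_integrable_of_split _ ?_ ?_
    · exact ((hξc.measurable.comp hvmeas).mul (by fun_prop : Measurable fun x : Euc n => x i)).mul (by fun_prop : Measurable fun x : Euc n => x j)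
    intro T₁ T₂ m1 m2 dj
    have e : ∀ (T : Set (Euc n)) (x : Euc n),
        T.indicator (fun x : Euc n => ξ (v x) * x i * x j) x
          = ξ (T.indicator v x) * x i * x j := by
      intro T x
      by_cases hx : x ∈ T
      · rw [Set.indicator_of_mem hx, Set.indicator_of_mem hx]
      · rw [Set.indicator_of_notMem hx, Set.indicator_of_notMem hx, hξ0, zero_mul, zero_mul]
    have hm := hmatv T₁ T₂ m1 m2 dj
    have hm' : momentMatrix n (fun x => ξ ((T₁ ∪ T₂).indicator v x)) i j
        = momentMatrix n (fun x => ξ (T₁.indicator v x)) i j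
          + momentMatrix n (fun x => ξ (T₂.indicator v x)) i j := by
      rw [hm, Matrix.add_apply]
    simp only [momentMatrix] at hm'
    simp only [e]
    exact hm'
  -- conclude
  have hfin := hval h (fun _ : Euc n => (0:ℝ)) hmem h0mem
  have hmaxh : (fun x => max (h x) ((fun _ : Euc n => (0:ℝ)) x)) = u := rfl
  have hminh : (fun x => min (h x) ((fun _ : Euc n => (0:ℝ)) x)) = v := rfl
  rw [hmaxh, hminh, hΨ0, add_zero] at hfin
  rw [← hfin, hpos u humem hunn, hneg v hvmem hvnp]
  ext i j
  rw [Matrix.add_apply]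
  simp only [momentMatrix]
  rw [← integral_add (hintu i j) (hintv i j)]
  congr 1
  funext x
  rcases le_total 0 (h x) with hx | hx
  · rw [show u x = h x from max_eq_left hx, show v x = 0 from min_eq_right hx, hξ0]
    ring
  · rw [show u x = 0 from max_eq_right hx, show v x = h x from min_eq_left hx, hξ0]
    ring


end
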